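/- arXiv:1906.09493 — 2 statements merged into one kernel-verified Lean document; each statement's English description precedes it below -/
import Mathlib

section
/- There exists an absolute constant C > 0 such that for every prime p, every nontrivial Dirichlet character χ modulo p, and every unit a ∈ (ZMod p)ˣ, the diagonal character sum satisfies Σ_{u ∈ ZMod p} |S(a,u)|² = |Σ_{u ∈ ZMod p} Σ_{b ≠ u} Σ_{b′ ≠ u} χ(b) · conj(χ(b′)) · e_p(a · ((u − b)⁻¹ − (u − b′)⁻¹))| ≤ C · p². -/
/-- The standard additive character `e_p(x) = exp(2πi·x̃/p)` on `ZMod p`,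
where `x̃ ∈ {0, …, p-1}` is the canonical representative of `x`. -/
noncomputable def eZMod (p : ℕ) (x : ZMod p) : ℂ :=
  Complex.exp (2 * Real.pi * Complex.I * (x.val : ℂ) / (p : ℂ))

/-- The shifted character sum `S(a,u) = Σ_{b ≠ u} χ(b) · e_p(a · (u − b)⁻¹)`. -/
noncomputable def Ssum (p : ℕ) [Fact p.Prime] (χ : DirichletCharacter ℂ p)
    (a : (ZMod p)ˣ) (u : ZMod p) : ℂ :=
  ∑ b ∈ Finset.univ.filter (fun b : ZMod p => b ≠ u),
    χ b * eZMod p ((a : ZMod p) * (u - b)⁻¹)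


set_option linter.unusedSectionVars false

section basic
variable (p : ℕ) [hp : Fact p.Prime]

lemma eZMod_def' (x : ZMod p) :
    eZMod p x = Complex.exp (((2 * Real.pi * x.val / p : ℝ)) * Complex.I) := by
  rw [eZMod]; congr 1; push_cast; ring

lemma eZMod_eq_pow (x : ZMod p) :
    eZMod p x = Complex.exp (2 * Real.pi * Complex.I / p) ^ (x.val) := by
  rw [← Complex.exp_nat_mul, eZMod]
  ring_nf

lemma zeta_pow_p : Complex.exp (2 * Real.pi * Complex.I / p) ^ p = 1 := by
  rw [← Complex.exp_nat_mul]
  have hp0 : (p : ℂ) ≠ 0 := Nat.cast_ne_zero.mpr hp.out.ne_zero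
  have : (p : ℂ) * (2 * Real.pi * Complex.I / p) = 2 * Real.pi * Complex.I := by
    field_simp
  rw [this, Complex.exp_eq_one_iff]
  exact ⟨1, by ring⟩

lemma eZMod_add (x y : ZMod p) : eZMod p (x + y) = eZMod p x * eZMod p y := by
  rw [eZMod_eq_pow, eZMod_eq_pow, eZMod_eq_pow, ← pow_add, ZMod.val_add,
    ← pow_eq_pow_mod _ (zeta_pow_p p)]

lemma eZMod_zero : eZMod p 0 = 1 := by
  simp [eZMod]

lemma abs_eZMod (x : ZMod p) : ‖eZMod p x‖ = 1 := by
  rw [eZMod_def', Complex.norm_exp_ofReal_mul_I]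

lemma eZMod_neg (x : ZMod p) : eZMod p (-x) = (eZMod p x)⁻¹ := by
  have h1 : eZMod p x * eZMod p (-x) = 1 := by
    rw [← eZMod_add]; simp [eZMod_zero]
  exact (inv_eq_of_mul_eq_one_right h1).symm

lemma conj_eZMod (x : ZMod p) : (starRingEnd ℂ) (eZMod p x) = eZMod p (-x) := by
  rw [eZMod_neg]
  refine eq_inv_of_mul_eq_one_left ?_
  have := Complex.mul_conj (eZMod p x)
  rw [Complex.normSq_eq_norm_sq, abs_eZMod] at this
  rw [mul_comm] at this
  simpa using this

lemma eZMod_sub (x y : ZMod p) :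
    eZMod p (x - y) = eZMod p x * (starRingEnd ℂ) (eZMod p y) := by
  rw [conj_eZMod, sub_eq_add_neg, eZMod_add]

lemma eZMod_mul_conj_self (x : ZMod p) :
    eZMod p x * (starRingEnd ℂ) (eZMod p x) = 1 := by
  rw [Complex.mul_conj, Complex.normSq_eq_norm_sq, abs_eZMod]
  norm_num
end basic

section chars
variable {p : ℕ} [hp : Fact p.Prime] (χ : DirichletCharacter ℂ p)

lemma conj_chi (v : ZMod p) : (starRingEnd ℂ) (χ v) = χ v⁻¹ := by
  by_cases hv : v = 0
  · subst hv; simp [χ.map_nonunit not_isUnit_zero]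
  · have h1 : χ v * χ v⁻¹ = 1 := by
      rw [← map_mul, mul_inv_cancel₀ hv, map_one]
    have hnorm : ‖χ v‖ = 1 := by
      have hpow : (χ v) ^ (p - 1) = 1 := by
        rw [← map_pow, ZMod.pow_card_sub_one_eq_one hv, map_one]
      exact Complex.norm_eq_one_of_pow_eq_one hpow
        (Nat.sub_ne_zero_of_lt hp.out.one_lt)
    have h2 : χ v * (starRingEnd ℂ) (χ v) = 1 := by
      rw [Complex.mul_conj, Complex.normSq_eq_norm_sq, hnorm]
      norm_num
    have h0 : χ v ≠ 0 := by
      intro h; rw [h, norm_zero] at hnorm; norm_num at hnorm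
    exact mul_left_cancel₀ h0 (h2.trans h1.symm)

lemma chi_sum_shift (hχ : χ ≠ 1) (c : ZMod p) (hc : c ≠ 0) :
    ∑ v : ZMod p, χ v * (starRingEnd ℂ) (χ (v + c)) = -1 := by
  have key : ∀ v : ZMod p, χ v * (starRingEnd ℂ) (χ (v + c)) = χ (v * (v + c)⁻¹) := by
    intro v
    rw [conj_chi, map_mul]
  simp_rw [key]
  have hbij : ∑ v : ZMod p, χ (v * (v + c)⁻¹)
      = ∑ w ∈ Finset.univ.filter (fun w : ZMod p => w ≠ 1), χ w := by
    rw [← Finset.sum_filter_add_sum_filter_not Finset.univ (fun v : ZMod p => v ≠ -c)]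
    have h2 : ∑ v ∈ Finset.univ.filter (fun v : ZMod p => ¬ v ≠ -c), χ (v * (v + c)⁻¹) = 0 := by
      apply Finset.sum_eq_zero
      intro v hv
      simp only [Finset.mem_filter, not_not] at hv
      rw [hv.2]
      simp [χ.map_nonunit not_isUnit_zero]
    rw [h2, add_zero]
    apply Finset.sum_nbij' (fun v => v * (v + c)⁻¹) (fun w => c * w * (1 - w)⁻¹)
    · intro v hv
      simp only [Finset.mem_filter, Finset.mem_univ, true_and] at hv ⊢
      have hvc : v + c ≠ 0 := by
        intro h'; exact hv (by linear_combination h')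
      intro h
      field_simp at h
      exact hc (by linear_combination -h)
    · intro w hw
      simp only [Finset.mem_filter, Finset.mem_univ, true_and] at hw ⊢
      have h1w : (1 : ZMod p) - w ≠ 0 := sub_ne_zero.mpr (Ne.symm hw)
      intro h
      apply hc
      field_simp at h
      linear_combination c * h
    · intro v hv
      simp only [Finset.mem_filter, Finset.mem_univ, true_and] at hv
      have hvc : v + c ≠ 0 := by
        intro h'; exact hv (by linear_combination h')
      have h1w : (1:ZMod p) - v * (v + c)⁻¹ = c * (v + c)⁻¹ := by
        field_simp
        ring
      rw [h1w, mul_inv, inv_inv]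
      field_simp
    · intro w hw
      simp only [Finset.mem_filter, Finset.mem_univ, true_and] at hw
      have h1w : (1 : ZMod p) - w ≠ 0 := sub_ne_zero.mpr (Ne.symm hw)
      have hvc : c * w * (1 - w)⁻¹ + c = c * (1 - w)⁻¹ := by
        field_simp
        ring
      rw [hvc, mul_inv, inv_inv]
      field_simp
    · intro v hv; rfl
  rw [hbij]
  have h0 := MulChar.sum_eq_zero_of_ne_one hχ
  rw [← Finset.sum_filter_add_sum_filter_not Finset.univ (fun w : ZMod p => w ≠ 1)] at h0
  have h1 : ∑ w ∈ Finset.univ.filter (fun w : ZMod p => ¬ w ≠ 1), χ w = 1 := by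
    rw [Finset.sum_eq_single (1 : ZMod p)] <;> simp
  rw [h1] at h0
  linear_combination h0

lemma card_ne_zero : (Finset.univ.filter (fun v : ZMod p => v ≠ 0)).card = p - 1 := by
  rw [Finset.filter_ne', Finset.card_erase_of_mem (Finset.mem_univ _)]
  simp [ZMod.card]

lemma chi_sum_diag :
    ∑ v : ZMod p, χ v * (starRingEnd ℂ) (χ v) = (p : ℂ) - 1 := by
  have h : ∀ v : ZMod p, χ v * (starRingEnd ℂ) (χ v) = if v ≠ 0 then 1 else 0 := by
    intro v
    by_cases hv : v = 0
    · subst hv; simp [χ.map_nonunit not_isUnit_zero]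
    · rw [conj_chi, ← map_mul, mul_inv_cancel₀ hv, map_one, if_pos hv]
  simp_rw [h]
  rw [Finset.sum_ite, Finset.sum_const, Finset.sum_const]
  rw [card_ne_zero]
  have h2 : (1:ℕ) ≤ p := hp.out.one_lt.le
  simp only [nsmul_eq_mul, smul_eq_mul, mul_one, mul_zero, add_zero]
  push_cast [Nat.cast_sub h2]
  ring

lemma innerSumChi (hχ : χ ≠ 1) (t s : ZMod p) (ht : t ≠ 0) (hs : s ≠ 0) :
    ∑ u : ZMod p, χ (u - t⁻¹) * (starRingEnd ℂ) (χ (u - s⁻¹)) =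
      if t = s then (p : ℂ) - 1 else -1 := by
  have hre : ∑ u : ZMod p, χ (u - t⁻¹) * (starRingEnd ℂ) (χ (u - s⁻¹))
      = ∑ v : ZMod p, χ v * (starRingEnd ℂ) (χ (v + (t⁻¹ - s⁻¹))) := by
    apply Fintype.sum_equiv (Equiv.subRight (t⁻¹ : ZMod p))
    intro u
    simp only [Equiv.subRight_apply]
    congr 2
    ring
  rw [hre]
  by_cases hts : t = s
  · subst hts
    simp only [sub_self, add_zero, if_pos rfl]
    exact chi_sum_diag χ
  · rw [if_neg hts]
    apply chi_sum_shift χ hχ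
    intro h
    apply hts
    rw [sub_eq_zero] at h
    exact inv_injective h
end chars

section main
variable {p : ℕ} [hp : Fact p.Prime] (χ : DirichletCharacter ℂ p) (a : (ZMod p)ˣ)

lemma Ssum_eq (u : ZMod p) :
    Ssum p χ a u = ∑ t ∈ Finset.univ.filter (fun t : ZMod p => t ≠ 0),
      χ (u - t⁻¹) * eZMod p ((a : ZMod p) * t) := by
  rw [Ssum]
  apply Finset.sum_nbij' (fun b => (u - b)⁻¹) (fun t => u - t⁻¹)
  · intro b hb
    simp only [Finset.mem_filter, Finset.mem_univ, true_and] at hb ⊢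
    exact inv_ne_zero (sub_ne_zero.mpr (Ne.symm hb))
  · intro t ht
    simp only [Finset.mem_filter, Finset.mem_univ, true_and] at ht ⊢
    intro h
    apply ht
    have : u - (u - t⁻¹) = 0 := by rw [h]; ring
    simp only [sub_sub_cancel] at this
    exact inv_eq_zero.mp this
  · intro b hb
    simp only [inv_inv, sub_sub_cancel]
  · intro t ht
    simp only [sub_sub_cancel, inv_inv]
  · intro b hb
    rw [inv_inv, sub_sub_cancel]

lemma normSq_cast (z : ℂ) : ((‖z‖ ^ 2 : ℝ) : ℂ) = z * (starRingEnd ℂ) z := by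
  rw [Complex.mul_conj, Complex.normSq_eq_norm_sq]

lemma Ssum_mul_conj (u : ZMod p) :
    Ssum p χ a u * (starRingEnd ℂ) (Ssum p χ a u) =
      ∑ b ∈ Finset.univ.filter (fun b : ZMod p => b ≠ u),
        ∑ b' ∈ Finset.univ.filter (fun b' : ZMod p => b' ≠ u),
          χ b * (starRingEnd ℂ) (χ b') *
            eZMod p ((a : ZMod p) * ((u - b)⁻¹ - (u - b')⁻¹)) := by
  rw [Ssum, map_sum, Finset.sum_mul_sum]
  refine Finset.sum_congr rfl fun b _ => Finset.sum_congr rfl fun b' _ => ?_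
  rw [map_mul]
  have he : eZMod p ((a : ZMod p) * (u - b)⁻¹) *
      (starRingEnd ℂ) (eZMod p ((a : ZMod p) * (u - b')⁻¹)) =
      eZMod p ((a : ZMod p) * ((u - b)⁻¹ - (u - b')⁻¹)) := by
    rw [← eZMod_sub, ← mul_sub]
  rw [mul_mul_mul_comm, he]

lemma sum_normSq_eq (hχ : χ ≠ 1) :
    ((∑ u : ZMod p, ‖Ssum p χ a u‖ ^ 2 : ℝ) : ℂ) =
      ∑ t ∈ Finset.univ.filter (fun t : ZMod p => t ≠ 0),
        ∑ s ∈ Finset.univ.filter (fun s : ZMod p => s ≠ 0),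
          (if t = s then (p : ℂ) - 1 else -1) *
            (eZMod p ((a : ZMod p) * t) * (starRingEnd ℂ) (eZMod p ((a : ZMod p) * s))) := by
  push_cast
  calc ∑ u : ZMod p, ((‖Ssum p χ a u‖ : ℂ)) ^ 2
      = ∑ u : ZMod p, Ssum p χ a u * (starRingEnd ℂ) (Ssum p χ a u) := by
        refine Finset.sum_congr rfl fun u _ => ?_
        rw [← normSq_cast]; push_cast; ring
    _ = ∑ u : ZMod p, ∑ t ∈ Finset.univ.filter (fun t : ZMod p => t ≠ 0),
          ∑ s ∈ Finset.univ.filter (fun s : ZMod p => s ≠ 0),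
          (χ (u - t⁻¹) * (starRingEnd ℂ) (χ (u - s⁻¹))) *
            (eZMod p ((a : ZMod p) * t) * (starRingEnd ℂ) (eZMod p ((a : ZMod p) * s))) := by
        refine Finset.sum_congr rfl fun u _ => ?_
        rw [Ssum_eq χ a u, map_sum, Finset.sum_mul_sum]
        refine Finset.sum_congr rfl fun t _ => Finset.sum_congr rfl fun s _ => ?_
        rw [map_mul]
        ring
    _ = ∑ t ∈ Finset.univ.filter (fun t : ZMod p => t ≠ 0),
          ∑ s ∈ Finset.univ.filter (fun s : ZMod p => s ≠ 0),
          (∑ u : ZMod p, χ (u - t⁻¹) * (starRingEnd ℂ) (χ (u - s⁻¹))) *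
            (eZMod p ((a : ZMod p) * t) * (starRingEnd ℂ) (eZMod p ((a : ZMod p) * s))) := by
        rw [Finset.sum_comm]
        refine Finset.sum_congr rfl fun t _ => ?_
        rw [Finset.sum_comm]
        refine Finset.sum_congr rfl fun s _ => ?_
        rw [Finset.sum_mul]
    _ = _ := by
        refine Finset.sum_congr rfl fun t ht => Finset.sum_congr rfl fun s hs => ?_
        simp only [Finset.mem_filter, Finset.mem_univ, true_and] at ht hs
        rw [innerSumChi χ hχ t s ht hs]

lemma sum_eval (hχ : χ ≠ 1) :
    ((∑ u : ZMod p, ‖Ssum p χ a u‖ ^ 2 : ℝ) : ℂ) =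
      (p : ℂ) * ((p : ℂ) - 1) -
        (∑ t ∈ Finset.univ.filter (fun t : ZMod p => t ≠ 0), eZMod p ((a : ZMod p) * t)) *
        (starRingEnd ℂ) (∑ t ∈ Finset.univ.filter (fun t : ZMod p => t ≠ 0),
          eZMod p ((a : ZMod p) * t)) := by
  rw [sum_normSq_eq χ a hχ]
  set F := Finset.univ.filter (fun t : ZMod p => t ≠ 0) with hF
  set E := fun t : ZMod p => eZMod p ((a : ZMod p) * t) with hE
  have step : ∀ t ∈ F, ∑ s ∈ F, (if t = s then (p : ℂ) - 1 else -1) * (E t * (starRingEnd ℂ) (E s))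
      = (p : ℂ) * (E t * (starRingEnd ℂ) (E t)) - ∑ s ∈ F, E t * (starRingEnd ℂ) (E s) := by
    intro t htF
    have hsplit : ∀ s : ZMod p, (if t = s then (p : ℂ) - 1 else -1) * (E t * (starRingEnd ℂ) (E s))
        = (if s = t then (p : ℂ) * (E t * (starRingEnd ℂ) (E s)) else 0)
          - E t * (starRingEnd ℂ) (E s) := by
      intro s
      by_cases h : s = t
      · subst h; rw [if_pos rfl, if_pos rfl]; ring
      · rw [if_neg (fun hh => h hh.symm), if_neg h]; ring
    simp_rw [hsplit]
    rw [Finset.sum_sub_distrib, Finset.sum_ite_eq' F t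
      (fun s => (p : ℂ) * (E t * (starRingEnd ℂ) (E s))), if_pos htF]
  rw [Finset.sum_congr rfl step, Finset.sum_sub_distrib]
  have hdiag : ∀ t ∈ F, (p : ℂ) * (E t * (starRingEnd ℂ) (E t)) = (p : ℂ) := by
    intro t _
    rw [hE]
    simp only []
    rw [eZMod_mul_conj_self, mul_one]
  rw [Finset.sum_congr rfl hdiag, Finset.sum_const, ← Finset.sum_mul_sum, map_sum]
  have hcard : F.card = p - 1 := card_ne_zero
  rw [hcard]
  have h2 : (1:ℕ) ≤ p := hp.out.one_lt.le
  rw [nsmul_eq_mul, Nat.cast_sub h2]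
  push_cast
  ring
end main

/-- The diagonal bound `𝓒₁ ≪ p²`: there is an absolute constant `C > 0` such that
for every prime `p`, nontrivial `χ` mod `p`, and unit `a`,
`Σ_u |S(a,u)|² = |Σ_u Σ_{b ≠ u} Σ_{b′ ≠ u} χ(b) conj(χ(b′)) e_p(a((u−b)⁻¹ − (u−b′)⁻¹))|
  ≤ C · p²`. -/
theorem stmt_2 :
    ∃ C : ℝ, 0 < C ∧ ∀ (p : ℕ) (_ : Fact p.Prime)
      (χ : DirichletCharacter ℂ p), χ ≠ 1 → ∀ (a : (ZMod p)ˣ),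
      (∑ u : ZMod p, ‖Ssum p χ a u‖ ^ 2 =
        ‖∑ u : ZMod p, ∑ b ∈ Finset.univ.filter (fun b : ZMod p => b ≠ u),
            ∑ b' ∈ Finset.univ.filter (fun b' : ZMod p => b' ≠ u),
              χ b * (starRingEnd ℂ) (χ b') *
                eZMod p ((a : ZMod p) * ((u - b)⁻¹ - (u - b')⁻¹))‖) ∧
      ∑ u : ZMod p, ‖Ssum p χ a u‖ ^ 2 ≤ C * (p : ℝ) ^ 2 := by
  refine ⟨1, one_pos, ?_⟩
  intro p hpf χ hχ a
  have hrpos : (0:ℝ) ≤ ∑ u : ZMod p, ‖Ssum p χ a u‖ ^ 2 :=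
    Finset.sum_nonneg fun u _ => sq_nonneg _
  constructor
  · have hTeq : ((∑ u : ZMod p, ‖Ssum p χ a u‖ ^ 2 : ℝ) : ℂ) =
        ∑ u : ZMod p, ∑ b ∈ Finset.univ.filter (fun b : ZMod p => b ≠ u),
            ∑ b' ∈ Finset.univ.filter (fun b' : ZMod p => b' ≠ u),
              χ b * (starRingEnd ℂ) (χ b') *
                eZMod p ((a : ZMod p) * ((u - b)⁻¹ - (u - b')⁻¹)) := by
      push_cast
      refine Finset.sum_congr rfl fun u _ => ?_
      rw [← Ssum_mul_conj χ a u, ← normSq_cast]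
      push_cast
      ring
    rw [← hTeq, Complex.norm_real, Real.norm_eq_abs, abs_of_nonneg hrpos]
  · have h3 := sum_eval χ a hχ
    set K := ∑ t ∈ Finset.univ.filter (fun t : ZMod p => t ≠ 0),
      eZMod p ((a : ZMod p) * t) with hK
    have h4 : ((∑ u : ZMod p, ‖Ssum p χ a u‖ ^ 2 : ℝ) : ℂ) =
        (((p:ℝ) * ((p:ℝ) - 1) - ‖K‖^2 : ℝ) : ℂ) := by
      rw [h3, Complex.mul_conj, Complex.normSq_eq_norm_sq]
      push_cast
      ring
    have h5 : ∑ u : ZMod p, ‖Ssum p χ a u‖ ^ 2 =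
        (p:ℝ) * ((p:ℝ) - 1) - ‖K‖^2 := Complex.ofReal_injective h4
    rw [h5, one_mul]
    nlinarith [sq_nonneg ‖K‖, Nat.cast_nonneg (α := ℝ) p]
end

section
/- There exists an absolute constant C > 0 such that for every prime p, every nontrivial Dirichlet character χ modulo p, and all units a, a′ ∈ (ZMod p)ˣ with a ≠ a′, the correlation sum satisfies |Σ_{u ∈ ZMod p} S(a,u) · conj(S(a′,u))| ≤ C · p^{3/2}, where S(a,u) = Σ_{b ∈ ZMod p, b ≠ u} χ(b) · e_p(a · (u − b)⁻¹). -/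
open Finset

namespace AuxStmt3

variable {p : ℕ} [hp : Fact p.Prime] (χ : DirichletCharacter ℂ p)

lemma eZMod_eq (x : ZMod p) : eZMod p x = ZMod.stdAddChar x := by
  haveI : NeZero p := ⟨hp.out.ne_zero⟩
  rw [ZMod.stdAddChar_apply, ZMod.toCircle_apply]
  rfl

lemma norm_std (x : ZMod p) : ‖ZMod.stdAddChar x‖ = 1 := by
  haveI : NeZero p := ⟨hp.out.ne_zero⟩
  rw [ZMod.stdAddChar_apply]
  exact Circle.norm_coe _

lemma conj_std (x : ZMod p) :
    (starRingEnd ℂ) (ZMod.stdAddChar x) = ZMod.stdAddChar (-x) := by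
  have h1 : ZMod.stdAddChar (-x) * ZMod.stdAddChar x = 1 := by
    rw [← AddChar.map_add_eq_mul]; simp
  have h2 : (starRingEnd ℂ) (ZMod.stdAddChar x) * ZMod.stdAddChar x = 1 := by
    rw [mul_comm, Complex.mul_conj]
    norm_cast
    rw [Complex.normSq_eq_norm_sq]
    simp [norm_std]
  have hne : ZMod.stdAddChar x ≠ 0 := by
    intro h; have := norm_std (p := p) x; rw [h] at this; simp at this
  exact mul_right_cancel₀ hne (h2.trans h1.symm)

lemma sum_std_zero {t : ZMod p} (ht : t ≠ 0) :
    ∑ c : ZMod p, ZMod.stdAddChar (t * c) = 0 := by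
  haveI : NeZero p := ⟨hp.out.ne_zero⟩
  have := AddChar.sum_eq_zero_of_ne_one (ZMod.isPrimitive_stdAddChar p ht)
  simpa [AddChar.mulShift_apply] using this

lemma sum_std_ne {t : ZMod p} (ht : t ≠ 0) :
    ∑ c ∈ univ.filter (fun c : ZMod p => c ≠ 0), ZMod.stdAddChar (t * c) = -1 := by
  have h := sum_std_zero ht
  rw [show (univ.filter (fun c : ZMod p => c ≠ 0)) = univ.erase 0 by
    ext c; simp [Finset.mem_erase, and_comm]]
  rw [Finset.sum_erase_eq_sub (mem_univ _), h]
  simp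


lemma mul_conj_self {u : ZMod p} (hu : u ≠ 0) : χ u * (starRingEnd ℂ) (χ u) = 1 := by
  have hunit : IsUnit u := isUnit_iff_ne_zero.mpr hu
  rw [Complex.mul_conj]
  norm_cast
  rw [Complex.normSq_eq_norm_sq, ← hunit.unit_spec,
    DirichletCharacter.unit_norm_eq_one]
  norm_num

lemma chi_ne_zero {u : ZMod p} (hu : u ≠ 0) : χ u ≠ 0 := by
  intro h
  have := mul_conj_self χ hu
  rw [h] at this; simp at this

lemma conj_chi {u : ZMod p} (hu : u ≠ 0) : (starRingEnd ℂ) (χ u) = χ u⁻¹ := by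
  have h1 : χ u⁻¹ * χ u = 1 := by
    rw [← map_mul, inv_mul_cancel₀ hu, map_one]
  have h2 := mul_conj_self χ hu
  rw [mul_comm] at h2
  exact mul_right_cancel₀ (chi_ne_zero χ hu) (h2.trans h1.symm)

lemma chi_zero : χ (0 : ZMod p) = 0 :=
  χ.map_nonunit (by simp [isUnit_iff_ne_zero])

lemma sum_chi_self : ∑ u : ZMod p, χ u * (starRingEnd ℂ) (χ u) = (p : ℂ) - 1 := by
  rw [show (univ : Finset (ZMod p)) = insert 0 (univ.erase 0) by simp,
    Finset.sum_insert (by simp)]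
  rw [chi_zero, Finset.sum_congr rfl
    (fun u hu => mul_conj_self χ (Finset.ne_of_mem_erase hu))]
  rw [Finset.sum_const]
  have : (univ.erase (0 : ZMod p)).card = p - 1 := by
    rw [Finset.card_erase_of_mem (mem_univ _), Finset.card_univ, ZMod.card]
  rw [this]
  have h1 : (1 : ℕ) ≤ p := hp.out.one_le
  simp [Nat.cast_sub h1]

lemma sum_shift (hχ : χ ≠ 1) {s : ZMod p} (hs : s ≠ 0) :
    ∑ u : ZMod p, χ (u + s) * (starRingEnd ℂ) (χ u) = -1 := by
  haveI : NeZero p := ⟨hp.out.ne_zero⟩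
  rw [show (univ : Finset (ZMod p)) = insert 0 (univ.erase 0) by simp,
    Finset.sum_insert (by simp), chi_zero]
  rw [show χ (0 + s) * (starRingEnd ℂ) 0 = 0 by simp]
  rw [zero_add]
  have hterm : ∀ u ∈ univ.erase (0 : ZMod p),
      χ (u + s) * (starRingEnd ℂ) (χ u) = χ (1 + s * u⁻¹) := by
    intro u hu
    have hu0 : u ≠ 0 := Finset.ne_of_mem_erase hu
    rw [conj_chi χ hu0, ← map_mul]
    congr 1
    field_simp
  rw [Finset.sum_congr rfl hterm]
  have hbij : ∑ u ∈ univ.erase (0 : ZMod p), χ (1 + s * u⁻¹)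
      = ∑ v ∈ univ.erase (1 : ZMod p), χ v := by
    refine Finset.sum_nbij' (fun u => 1 + s * u⁻¹) (fun v => s * (v - 1)⁻¹) ?_ ?_ ?_ ?_ ?_
    · intro u hu
      have hu0 : u ≠ 0 := Finset.ne_of_mem_erase hu
      simp only [Finset.mem_erase, mem_univ, and_true]
      intro h
      have : s * u⁻¹ = 0 := by linear_combination h
      simp [hs, hu0] at this
    · intro v hv
      have hv1 : v ≠ 1 := Finset.ne_of_mem_erase hv
      simp only [Finset.mem_erase, mem_univ, and_true]
      have : v - 1 ≠ 0 := sub_ne_zero.mpr hv1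
      simp [hs, this]
    · intro u hu
      have hu0 : u ≠ 0 := Finset.ne_of_mem_erase hu
      field_simp
      simp [hs]
    · intro v hv
      have hv1 : v ≠ 1 := Finset.ne_of_mem_erase hv
      have h0 : v - 1 ≠ 0 := sub_ne_zero.mpr hv1
      field_simp
      ring
    · intro u hu; rfl
  rw [hbij, Finset.sum_erase_eq_sub (mem_univ _)]
  rw [MulChar.sum_eq_zero_of_ne_one hχ, map_one]
  ring

lemma Ssum_eq (a : (ZMod p)ˣ) (u : ZMod p) :
    Ssum p χ a u = ∑ c ∈ univ.filter (fun c : ZMod p => c ≠ 0),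
      χ (u - c⁻¹) * ZMod.stdAddChar ((a : ZMod p) * c) := by
  unfold Ssum
  refine Finset.sum_nbij' (fun b => (u - b)⁻¹) (fun c => u - c⁻¹) ?_ ?_ ?_ ?_ ?_
  · intro b hb
    have hb' : b ≠ u := by simpa using hb
    simp only [Finset.mem_filter, mem_univ, true_and]
    exact inv_ne_zero (sub_ne_zero.mpr (Ne.symm hb'))
  · intro c hc
    have hc' : c ≠ 0 := by simpa using hc
    simp only [Finset.mem_filter, mem_univ, true_and]
    intro h
    have : c⁻¹ = 0 := by linear_combination -h + u
    simp [hc'] at this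
  · intro b hb
    show u - ((u - b)⁻¹)⁻¹ = b
    rw [inv_inv, sub_sub_cancel]
  · intro c hc
    show (u - (u - c⁻¹))⁻¹ = c
    rw [sub_sub_cancel, inv_inv]
  · intro b hb
    show χ b * eZMod p ((a : ZMod p) * (u - b)⁻¹)
        = χ (u - ((u - b)⁻¹)⁻¹) * ZMod.stdAddChar ((a : ZMod p) * (u - b)⁻¹)
    rw [eZMod_eq, inv_inv, sub_sub_cancel]

lemma key (hχ : χ ≠ 1) (a a' : (ZMod p)ˣ) (h : a ≠ a') :
    ∑ u : ZMod p, Ssum p χ a u * (starRingEnd ℂ) (Ssum p χ a' u) = -(p : ℂ) - 1 := by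
  set F : Finset (ZMod p) := univ.filter (fun c : ZMod p => c ≠ 0) with hF
  set E : ZMod p → ZMod p → ℂ := fun c c' =>
    ZMod.stdAddChar ((a : ZMod p) * c) * ZMod.stdAddChar (-((a' : ZMod p) * c')) with hE
  have expand : ∀ u : ZMod p, Ssum p χ a u * (starRingEnd ℂ) (Ssum p χ a' u)
      = ∑ c ∈ F, ∑ c' ∈ F, E c c' * (χ (u - c⁻¹) * (starRingEnd ℂ) (χ (u - c'⁻¹))) := by
    intro u
    rw [Ssum_eq χ a u, Ssum_eq χ a' u, map_sum, Finset.sum_mul_sum]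
    refine Finset.sum_congr rfl fun c _ => Finset.sum_congr rfl fun c' _ => ?_
    rw [map_mul (starRingEnd ℂ), conj_std]
    ring
  rw [Finset.sum_congr rfl (fun u _ => expand u)]
  rw [Finset.sum_comm]
  have swap2 : ∀ c ∈ F, ∑ u : ZMod p, ∑ c' ∈ F,
        E c c' * (χ (u - c⁻¹) * (starRingEnd ℂ) (χ (u - c'⁻¹)))
      = ∑ c' ∈ F, E c c' * ∑ u : ZMod p, χ (u - c⁻¹) * (starRingEnd ℂ) (χ (u - c'⁻¹)) := by
    intro c _
    rw [Finset.sum_comm]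
    exact Finset.sum_congr rfl fun c' _ => by rw [Finset.mul_sum]
  rw [Finset.sum_congr rfl swap2]
  have hT : ∀ c ∈ F, ∀ c' ∈ F,
      (∑ u : ZMod p, χ (u - c⁻¹) * (starRingEnd ℂ) (χ (u - c'⁻¹)))
      = if c = c' then (p : ℂ) - 1 else -1 := by
    intro c hc c' hc'
    have hre : (∑ w : ZMod p, χ (w + (c'⁻¹ - c⁻¹)) * (starRingEnd ℂ) (χ w))
        = ∑ u : ZMod p, χ (u - c⁻¹) * (starRingEnd ℂ) (χ (u - c'⁻¹)) := by
      refine Fintype.sum_equiv (Equiv.addRight (c'⁻¹ : ZMod p)) _ _ fun w => ?_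
      simp only [Equiv.coe_addRight]
      rw [show w + (c'⁻¹ - c⁻¹) = w + c'⁻¹ - c⁻¹ from by ring,
        show w + c'⁻¹ - c'⁻¹ = w from by ring]
    rw [← hre]
    by_cases hcc : c = c'
    · subst hcc
      simp only [sub_self, if_pos rfl]
      simpa using sum_chi_self χ
    · have hs : c'⁻¹ - c⁻¹ ≠ 0 := by
        intro hz
        apply hcc
        have : c'⁻¹ = c⁻¹ := by linear_combination hz
        have hc0 : c ≠ 0 := by simpa [hF] using hc
        have hc0' : c' ≠ 0 := by simpa [hF] using hc'
        exact (inv_injective this).symm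
      rw [if_neg hcc]
      exact sum_shift χ hχ hs
  have split : ∀ c ∈ F, (∑ c' ∈ F, E c c' *
        ∑ u : ZMod p, χ (u - c⁻¹) * (starRingEnd ℂ) (χ (u - c'⁻¹)))
      = (p : ℂ) * E c c - ∑ c' ∈ F, E c c' := by
    intro c hc
    have step : ∀ c' ∈ F, E c c' * (∑ u : ZMod p, χ (u - c⁻¹) * (starRingEnd ℂ) (χ (u - c'⁻¹)))
        = (if c' = c then (p : ℂ) * E c c' else 0) - E c c' := by
      intro c' hc'
      rw [hT c hc c' hc']
      by_cases hcc : c = c'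
      · subst hcc; simp; ring
      · rw [if_neg hcc, if_neg (Ne.symm hcc)]; ring
    rw [Finset.sum_congr rfl step, Finset.sum_sub_distrib,
      Finset.sum_ite_eq' F c (fun c' => (p : ℂ) * E c c'), if_pos hc]
  rw [Finset.sum_congr rfl split, Finset.sum_sub_distrib]
  have hdiag : ∑ c ∈ F, (p : ℂ) * E c c = (p : ℂ) * (-1) := by
    rw [← Finset.mul_sum]
    congr 1
    have : ∀ c ∈ F, E c c = ZMod.stdAddChar ((((a : ZMod p) - (a' : ZMod p))) * c) := by
      intro c _
      simp only [hE]
      rw [← AddChar.map_add_eq_mul]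
      congr 1
      ring
    rw [Finset.sum_congr rfl this]
    refine sum_std_ne (sub_ne_zero.mpr fun heq => h (Units.ext heq))
  have hoff : ∑ c ∈ F, ∑ c' ∈ F, E c c' = 1 := by
    have : ∑ c ∈ F, ∑ c' ∈ F, E c c'
        = (∑ c ∈ F, ZMod.stdAddChar ((a : ZMod p) * c))
          * (∑ c' ∈ F, ZMod.stdAddChar (-((a' : ZMod p)) * c')) := by
      rw [Finset.sum_mul_sum]
      exact Finset.sum_congr rfl fun c _ => Finset.sum_congr rfl fun c' _ => by
        simp only [hE, neg_mul]
    rw [this, sum_std_ne (a.ne_zero), sum_std_ne (neg_ne_zero.mpr a'.ne_zero)]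
    ring
  rw [hdiag, hoff]
  ring

end AuxStmt3

/-- The off-diagonal bound `𝓒̃ ≪ p^{3/2}`: there is an absolute constant `C > 0` such
that for all prime `p`, nontrivial `χ` mod `p` and distinct units `a ≠ a′`,
`|Σ_u S(a,u) · conj(S(a′,u))| ≤ C · p^{3/2}`. -/
theorem stmt_3 :
    ∃ C : ℝ, 0 < C ∧ ∀ (p : ℕ) (_ : Fact p.Prime)
      (χ : DirichletCharacter ℂ p), χ ≠ 1 → ∀ (a a' : (ZMod p)ˣ), a ≠ a' →
      ‖∑ u : ZMod p, Ssum p χ a u * (starRingEnd ℂ) (Ssum p χ a' u)‖ ≤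
        C * (p : ℝ) ^ ((3 : ℝ) / 2) := by
  refine ⟨2, by norm_num, ?_⟩
  intro p hp χ hχ a a' h
  rw [AuxStmt3.key χ hχ a a' h]
  have h1 : (1 : ℝ) ≤ (p : ℝ) := by exact_mod_cast hp.out.one_le
  have hnorm : ‖-(p : ℂ) - 1‖ = (p : ℝ) + 1 := by
    rw [show -(p : ℂ) - 1 = (((-((p : ℝ) + 1)) : ℝ) : ℂ) by push_cast; ring]
    rw [Complex.norm_real]; rw [Real.norm_eq_abs, abs_neg, abs_of_nonneg (by linarith)]
  rw [hnorm]
  have hle : (p : ℝ) ≤ (p : ℝ) ^ ((3 : ℝ) / 2) := by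
    calc (p : ℝ) = (p : ℝ) ^ (1 : ℝ) := (Real.rpow_one _).symm
    _ ≤ (p : ℝ) ^ ((3 : ℝ) / 2) :=
      Real.rpow_le_rpow_of_exponent_le h1 (by norm_num)
  linarith
end
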